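/- Let u : ℝ → ℝ be continuous and 1-periodic, let k_R > 0, and suppose that for every k ∈ ℤ the Fourier coefficient û(k) = ∫₀¹ u(x) e^{−2πikx} dx equals ( z1 u(0) + z2 u(R) e^{−2πikR} ) / ( k_R² + 4π²k² ). Then for every N ∈ ℕ and every x ∈ ℝ, (Π_N^⊥ u)(x) = ∑_{k=N+1}^∞ ( 2 / (k_R² + 4π²k²) ) · ( z1 u(0) cos(2πkx) + z2 u(R) cos(2πk(x−R)) ), the series converging absolutely. (Lemma giving the explicit expression of the projection remainder.) -/

import Mathlib

open MeasureTheory intervalIntegral Real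

noncomputable section

/-- Fourier coefficient `ŵ(k) = ∫₀¹ w(x) e^{−2πikx} dx`. -/
def fc (w : ℝ → ℝ) (k : ℤ) : ℂ :=
  ∫ x in (0:ℝ)..1, (w x : ℂ) * Complex.exp (-(2 * (π:ℂ) * Complex.I * (k:ℂ) * (x:ℂ)))

/-- `(Π_N^⊥ w)(x) = w(x) − ∑_{|k|≤N} ŵ(k) e^{2πikx}`. -/
def projPerp (N : ℕ) (w : ℝ → ℝ) (x : ℝ) : ℝ :=
  w x - (∑ k ∈ Finset.Icc (-(N:ℤ)) (N:ℤ),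
    fc w k * Complex.exp (2 * (π:ℂ) * Complex.I * (k:ℂ) * (x:ℂ))).re

/-- If `u` is continuous, 1-periodic, and its Fourier coefficients satisfy
`û(k) = (z1 u(0) + z2 u(R) e^{−2πikR})/(k_R² + 4π²k²)` with `k_R > 0`, then for every
`N` and `x`, `(Π_N^⊥ u)(x) = ∑_{k=N+1}^∞ 2/(k_R²+4π²k²)·(z1 u(0) cos(2πkx) + z2 u(R) cos(2πk(x−R)))`,
the series converging absolutely. (Lemma 2, eq. (PiNuNx).) -/
theorem projPerp_explicit (z1 z2 R : ℝ) (hz1 : 0 < z1) (hz2 : 0 < z2)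
    (hR : R ∈ Set.Ioo (0 : ℝ) 1) (u : ℝ → ℝ) (hu : Continuous u)
    (huper : ∀ x, u (x + 1) = u x) (kR : ℝ) (hkR : 0 < kR)
    (hfc : ∀ k : ℤ, fc u k =
      ((z1:ℂ) * (u 0 : ℂ) + (z2:ℂ) * (u R : ℂ) *
          Complex.exp (-(2 * (π:ℂ) * Complex.I * (k:ℂ) * (R:ℂ)))) /
        ((kR:ℂ) ^ 2 + 4 * (π:ℂ) ^ 2 * (k:ℂ) ^ 2)) :
    ∀ (N : ℕ) (x : ℝ),
      Summable (fun k : ℕ =>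
        |2 / (kR ^ 2 + 4 * π ^ 2 * ((N : ℝ) + 1 + (k : ℝ)) ^ 2) *
          (z1 * u 0 * Real.cos (2 * π * ((N : ℝ) + 1 + (k : ℝ)) * x) +
            z2 * u R * Real.cos (2 * π * ((N : ℝ) + 1 + (k : ℝ)) * (x - R)))|) ∧
      projPerp N u x = ∑' k : ℕ,
        2 / (kR ^ 2 + 4 * π ^ 2 * ((N : ℝ) + 1 + (k : ℝ)) ^ 2) *
          (z1 * u 0 * Real.cos (2 * π * ((N : ℝ) + 1 + (k : ℝ)) * x) +
            z2 * u R * Real.cos (2 * π * ((N : ℝ) + 1 + (k : ℝ)) * (x - R))) := by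
  have hπ := Real.pi_pos
  haveI : Fact (0 < (1:ℝ)) := ⟨one_pos⟩
  have hden : ∀ m : ℤ, 0 < kR^2 + 4*π^2*(m:ℝ)^2 := by
    intro m
    have : (0:ℝ) ≤ 4*π^2*(m:ℝ)^2 := by positivity
    nlinarith [sq_nonneg kR, hkR]
  -- the lifted function on the circle
  have per : Function.Periodic (fun t : ℝ => (u t : ℂ)) 1 := fun t => by simp [huper t]
  have hcont : Continuous per.lift :=
    Continuous.quotient_liftOn' (Complex.continuous_ofReal.comp hu) _
  set F : C(AddCircle (1:ℝ), ℂ) := ⟨per.lift, hcont⟩ with hF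
  have hFc : ∀ n : ℤ, fourierCoeff (⇑F) n = fc u n := by
    intro n
    rw [fourierCoeff_eq_intervalIntegral _ n 0]
    simp only [zero_add, one_smul, div_one, one_div]
    rw [fc]
    apply intervalIntegral.integral_congr
    intro y hy
    show (fourier (-n)) ((y:ℝ) : AddCircle (1:ℝ)) • F ((y:ℝ) : AddCircle (1:ℝ)) = _
    have h1 : F ((y:ℝ) : AddCircle (1:ℝ)) = (u y : ℂ) := rfl
    rw [h1, fourier_coe_apply, smul_eq_mul, mul_comm]
    congr 1
    push_cast
    ring_nf
  -- summability of Fourier coefficients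
  set C : ℝ := z1 * |u 0| + z2 * |u R| with hC
  have hC0 : 0 ≤ C := by positivity
  have hnat : Summable (fun n : ℕ => C / (kR^2 + 4*π^2*(n:ℝ)^2)) := by
    rw [← summable_nat_add_iff 1]
    have hmaj : Summable (fun n : ℕ => (C/(4*π^2)) * (1 / ((n:ℝ)+1)^2)) := by
      apply Summable.mul_left
      have := (summable_nat_add_iff (f := fun n : ℕ => 1 / (n:ℝ)^2) 1).mpr
        (summable_one_div_nat_pow.mpr one_lt_two)
      exact this.congr (fun n => by push_cast; ring_nf)
    apply Summable.of_nonneg_of_le (fun n => by positivity) _ hmaj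
    intro n
    have hrw : C/(4*π^2)*(1/((n:ℝ)+1)^2) = C/(4*π^2*((n:ℝ)+1)^2) := by
      field_simp
    rw [hrw]
    push_cast
    gcongr
    nlinarith [sq_nonneg kR]
  have hmajZ : Summable (fun m : ℤ => C / (kR^2 + 4*π^2*(m:ℝ)^2)) := by
    apply Summable.of_nat_of_neg
    · exact hnat.congr (fun n => by push_cast; ring_nf)
    · exact hnat.congr (fun n => by push_cast; ring_nf)
  have hbound : ∀ m : ℤ, ‖fc u m‖ ≤ C / (kR^2 + 4*π^2*(m:ℝ)^2) := by
    intro m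
    rw [hfc m]
    have e3 : ((kR:ℂ)^2 + 4*(π:ℂ)^2*(m:ℂ)^2) = ((kR^2+4*π^2*(m:ℝ)^2 : ℝ):ℂ) := by push_cast; ring
    rw [e3, norm_div]
    have hd : ‖(((kR^2+4*π^2*(m:ℝ)^2 : ℝ)):ℂ)‖ = kR^2+4*π^2*(m:ℝ)^2 := by
      rw [Complex.norm_real, Real.norm_of_nonneg (hden m).le]
    rw [hd]
    gcongr
    calc ‖(z1:ℂ) * (u 0:ℂ) + (z2:ℂ) * (u R:ℂ) * Complex.exp (-(2 * (π:ℂ) * Complex.I * (m:ℂ) * (R:ℂ)))‖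
        ≤ ‖(z1:ℂ) * (u 0:ℂ)‖ + ‖(z2:ℂ) * (u R:ℂ) * Complex.exp (-(2 * (π:ℂ) * Complex.I * (m:ℂ) * (R:ℂ)))‖ := norm_add_le _ _
      _ = C := by
          have e1 : -(2 * (π:ℂ) * Complex.I * (m:ℂ) * (R:ℂ)) = ((-(2*π*m*R):ℝ):ℂ) * Complex.I := by
            push_cast; ring
          rw [e1, norm_mul, norm_mul, norm_mul]
          simp only [Complex.norm_exp_ofReal_mul_I, Complex.norm_real, Real.norm_eq_abs, mul_one]
          rw [abs_of_pos hz1, abs_of_pos hz2]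
  have hsumF : Summable (fourierCoeff (⇑F)) := by
    apply Summable.of_norm_bounded hmajZ
    intro m; rw [hFc m]; exact hbound m
  intro N x
  have hptr := has_pointwise_sum_fourier_series_of_summable hsumF ((x:ℝ) : AddCircle (1:ℝ))
  have hFx : F ((x:ℝ) : AddCircle (1:ℝ)) = ((u x : ℝ) : ℂ) := rfl
  rw [hFx] at hptr
  have hxsum : HasSum (fun i : ℤ => fc u i * Complex.exp (2*(π:ℂ)*Complex.I*(i:ℂ)*(x:ℂ))) ((u x : ℝ) : ℂ) := by
    have hfun : (fun i : ℤ => fc u i * Complex.exp (2*(π:ℂ)*Complex.I*(i:ℂ)*(x:ℂ)))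
        = fun i : ℤ => fourierCoeff (⇑F) i • fourier i ((x:ℝ) : AddCircle (1:ℝ)) := by
      funext i
      rw [hFc i, fourier_coe_apply, smul_eq_mul]
      norm_num
    rw [hfun]
    exact hptr
  set g : ℤ → ℝ := fun m => (fc u m * Complex.exp (2*(π:ℂ)*Complex.I*(m:ℂ)*(x:ℂ))).re with hg
  have hgsum : HasSum g (u x) := by
    have := hxsum.mapL Complex.reCLM
    simpa [-Complex.mul_re] using this
  have hgsummable : Summable g := hgsum.summable
  have key : ∀ m : ℤ, g m = 1/(kR^2+4*π^2*(m:ℝ)^2) *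
      (z1 * u 0 * Real.cos (2*π*(m:ℝ)*x) + z2 * u R * Real.cos (2*π*(m:ℝ)*(x-R))) := by
    intro m
    have e3 : ((kR:ℂ)^2 + 4*(π:ℂ)^2*(m:ℂ)^2) = ((kR^2+4*π^2*(m:ℝ)^2 : ℝ):ℂ) := by push_cast; ring
    have e2 : (2*(π:ℂ)*Complex.I*(m:ℂ)*(x:ℂ)) = (((2*π*(m:ℝ)*x):ℝ):ℂ) * Complex.I := by
      push_cast; ring
    have e4 : Complex.exp (-(2*(π:ℂ)*Complex.I*(m:ℂ)*(R:ℂ))) * Complex.exp (2*(π:ℂ)*Complex.I*(m:ℂ)*(x:ℂ))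
        = Complex.exp ((((2*π*(m:ℝ)*(x-R)):ℝ):ℂ) * Complex.I) := by
      rw [← Complex.exp_add]; congr 1; push_cast; ring
    show (fc u m * Complex.exp (2*(π:ℂ)*Complex.I*(m:ℂ)*(x:ℂ))).re = _
    rw [hfc m, e3, div_mul_eq_mul_div, add_mul, mul_assoc ((z2:ℂ) * ((u R : ℝ):ℂ)), e4, e2, Complex.div_ofReal_re]
    rw [Complex.exp_mul_I, Complex.exp_mul_I]
    simp only [← Complex.ofReal_cos, ← Complex.ofReal_sin, Complex.add_re, Complex.mul_re,
      Complex.ofReal_re, Complex.ofReal_im, Complex.I_re, Complex.I_im, Complex.add_im,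
      Complex.mul_im]
    ring
  set S : Finset ℤ := Finset.Icc (-(N:ℤ)) (N:ℤ) with hS
  have hproj : projPerp N u x = u x - ∑ k ∈ S, g k := by
    rw [projPerp, Complex.re_sum]
  have hpos_inj : Function.Injective (fun k : ℕ => (N:ℤ)+1+(k:ℤ)) := by
    intro a b h; simpa using h
  have hneg_inj : Function.Injective (fun k : ℕ => -((N:ℤ)+1+(k:ℤ))) := by
    intro a b h; simp only [neg_inj] at h; simpa using h
  have hsetcompl : (↑S : Set ℤ)ᶜ = Set.range (fun k : ℕ => (N:ℤ)+1+(k:ℤ)) ∪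
      Set.range (fun k : ℕ => -((N:ℤ)+1+(k:ℤ))) := by
    ext m
    simp only [hS, Finset.coe_Icc, Set.mem_compl_iff, Set.mem_Icc, Set.mem_union, Set.mem_range,
      not_and_or, not_le]
    constructor
    · rintro (h | h)
      · right
        exact ⟨(-m - ((N:ℤ)+1)).toNat, show -((N:ℤ)+1+((-m - ((N:ℤ)+1)).toNat : ℤ)) = m by omega⟩
      · left
        exact ⟨(m - ((N:ℤ)+1)).toNat, show (N:ℤ)+1+((m - ((N:ℤ)+1)).toNat : ℤ) = m by omega⟩
    · rintro (⟨n, rfl⟩ | ⟨n, rfl⟩)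
      · right; show (N:ℤ) < (N:ℤ)+1+(n:ℤ); omega
      · left; show -((N:ℤ)+1+(n:ℤ)) < -(N:ℤ); omega
  have hcompl := Summable.tsum_add_tsum_compl (s := (↑S : Set ℤ)) (hgsummable.subtype _) (hgsummable.subtype _)
  have htsum : ∑' m, g m = u x := hgsum.tsum_eq
  have hfin : ∑' (m : (↑S : Set ℤ)), g m = ∑ k ∈ S, g k := Finset.tsum_subtype S g
  have htail : ∑' (m : ↑(↑S : Set ℤ)ᶜ), g m = u x - ∑ k ∈ S, g k := by
    rw [← htsum, ← hcompl, hfin]; ring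
  have hdisj : Disjoint (Set.range (fun k : ℕ => (N:ℤ)+1+(k:ℤ)))
      (Set.range (fun k : ℕ => -((N:ℤ)+1+(k:ℤ)))) := by
    rw [Set.disjoint_left]
    rintro a ⟨n, rfl⟩ ⟨mm, hm⟩
    have : -((N:ℤ)+1+(mm:ℤ)) = (N:ℤ)+1+(n:ℤ) := hm
    omega
  have hsplit : ∑' (m : ↑(↑S : Set ℤ)ᶜ), g m
      = (∑' k : ℕ, g ((N:ℤ)+1+(k:ℤ))) + ∑' k : ℕ, g (-((N:ℤ)+1+(k:ℤ))) := by
    rw [hsetcompl, Summable.tsum_union_disjoint hdisj (hgsummable.subtype _) (hgsummable.subtype _),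
      tsum_range g hpos_inj, tsum_range g hneg_inj]
  have hposS : Summable (fun k : ℕ => g ((N:ℤ)+1+(k:ℤ))) := by
    have := hgsummable.comp_injective hpos_inj
    exact this
  have gsymm : ∀ k : ℕ, g (-((N:ℤ)+1+(k:ℤ))) = g ((N:ℤ)+1+(k:ℤ)) := by
    intro k
    rw [key, key]
    push_cast
    rw [show 2*π*(-((N:ℝ)+1+(k:ℝ)))*x = -(2*π*((N:ℝ)+1+(k:ℝ))*x) by ring,
       show 2*π*(-((N:ℝ)+1+(k:ℝ)))*(x-R) = -(2*π*((N:ℝ)+1+(k:ℝ))*(x-R)) by ring,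
       Real.cos_neg, Real.cos_neg, neg_sq]
  have hterm : ∀ k : ℕ, 2 * g ((N:ℤ)+1+(k:ℤ))
      = 2 / (kR ^ 2 + 4 * π ^ 2 * ((N : ℝ) + 1 + (k : ℝ)) ^ 2) *
          (z1 * u 0 * Real.cos (2 * π * ((N : ℝ) + 1 + (k : ℝ)) * x) +
            z2 * u R * Real.cos (2 * π * ((N : ℝ) + 1 + (k : ℝ)) * (x - R))) := by
    intro k
    rw [key]
    push_cast
    ring
  constructor
  · have h2 : Summable (fun k : ℕ => |2 * g ((N:ℤ)+1+(k:ℤ))|) := (hposS.mul_left 2).abs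
    exact h2.congr (fun k => by rw [hterm k])
  · rw [hproj, ← htail, hsplit, tsum_congr gsymm,
      ← Summable.tsum_add hposS hposS]
    exact tsum_congr (fun k => by rw [← hterm k]; ring)


end
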